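/- Let p : (0,∞) → ℝ be twice continuously differentiable with p'(ρ) > 0 and 2p'(ρ) + ρ p''(ρ) > 0 for all ρ > 0, and set h(ρ) = ∫₁^ρ p'(τ)/τ dτ, H(ρ) = p'(ρ)/2 + h(ρ). Let ψ ∈ ℝ and assume there exist ρ₀, ρ₁ > 0 with h(ρ₀) > ψ and H(ρ₁) < ψ. Then: (a) there is a unique ρ* > 0 with H(ρ*) = ψ; (b) ψ − h(ρ*) = p'(ρ*)/2 > 0, so the critical speed q_cr(ψ) := (2ψ − 2h(ρ*))^{1/2} is well defined and positive; (c) for every q ≥ 0 and ρ > 0 satisfying the Bernoulli relation h(ρ) = ψ − q²/2, one has q² < p'(ρ) if and only if q < q_cr(ψ), and q² = p'(ρ) if and only if q = q_cr(ψ). -/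

import Mathlib

open Set


/-- Existence and uniqueness of the critical state and characterization of
subsonic/sonic speeds through the critical speed `q_cr(ψ) = √(2ψ − 2h(ρ*))`. -/
theorem critical_speed
    (p h H : ℝ → ℝ)
    (hp : ContDiffOn ℝ 2 p (Set.Ioi 0))
    (hp1 : ∀ ρ > (0:ℝ), 0 < deriv p ρ)
    (hp2 : ∀ ρ > (0:ℝ), 0 < 2 * deriv p ρ + ρ * deriv (deriv p) ρ)
    (hh : ∀ ρ : ℝ, h ρ = ∫ τ in (1:ℝ)..ρ, deriv p τ / τ)
    (hH : ∀ ρ : ℝ, H ρ = deriv p ρ / 2 + h ρ)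
    (ψ : ℝ)
    (hab : ∃ ρ₀ > (0:ℝ), ψ < h ρ₀)
    (hbe : ∃ ρ₁ > (0:ℝ), H ρ₁ < ψ) :
    -- (a) unique critical density
    (∃! ρs : ℝ, 0 < ρs ∧ H ρs = ψ) ∧
    -- (b), (c)
    (∀ ρs : ℝ, 0 < ρs → H ρs = ψ →
      (ψ - h ρs = deriv p ρs / 2 ∧ 0 < Real.sqrt (2 * ψ - 2 * h ρs)) ∧
      (∀ q ρ : ℝ, 0 ≤ q → 0 < ρ → h ρ = ψ - q^2 / 2 →
        ((q^2 < deriv p ρ ↔ q < Real.sqrt (2 * ψ - 2 * h ρs)) ∧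
         (q^2 = deriv p ρ ↔ q = Real.sqrt (2 * ψ - 2 * h ρs))))) := by
  have hopen : IsOpen (Set.Ioi (0:ℝ)) := isOpen_Ioi
  -- deriv p is C¹ on Ioi 0
  have hf1 : ContDiffOn ℝ 1 (deriv p) (Set.Ioi 0) :=
    hp.deriv_of_isOpen hopen (by norm_num)
  have hfc : ContinuousOn (deriv p) (Set.Ioi 0) := hf1.continuousOn
  -- the integrand
  have hgc : ContinuousOn (fun τ : ℝ => deriv p τ / τ) (Set.Ioi 0) :=
    hfc.div continuousOn_id (fun x hx => ne_of_gt hx)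
  -- h has derivative deriv p x / x at each x > 0
  have hhd : ∀ x ∈ Set.Ioi (0:ℝ), HasDerivAt h (deriv p x / x) x := by
    intro x hx
    have hsub : Set.uIcc (1:ℝ) x ⊆ Set.Ioi 0 := by
      intro t ht
      rcases Set.mem_uIcc.1 ht with ⟨h1, h2⟩ | ⟨h1, h2⟩
      · exact lt_of_lt_of_le one_pos h1
      · exact lt_of_lt_of_le hx h1
    have hint : IntervalIntegrable (fun τ : ℝ => deriv p τ / τ) MeasureTheory.volume 1 x :=
      (hgc.mono hsub).intervalIntegrable
    have hca : ContinuousAt (fun τ : ℝ => deriv p τ / τ) x :=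
      hgc.continuousAt (hopen.mem_nhds hx)
    have := intervalIntegral.integral_hasDerivAt_right hint
      (hgc.stronglyMeasurableAtFilter hopen x hx) hca
    have heq : h = fun u => ∫ τ in (1:ℝ)..u, deriv p τ / τ := funext hh
    rw [heq]
    exact this
  have hHd : ∀ x ∈ Set.Ioi (0:ℝ), HasDerivAt H (deriv (deriv p) x / 2 + deriv p x / x) x := by
    intro x hx
    have hfd : HasDerivAt (deriv p) (deriv (deriv p) x) x := by
      have : DifferentiableAt ℝ (deriv p) x :=
        (hf1.differentiableOn one_ne_zero x hx).differentiableAt (hopen.mem_nhds hx)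
      exact this.hasDerivAt
    have heq : H = fun u => deriv p u / 2 + h u := funext hH
    rw [heq]
    exact (hfd.div_const 2).add (hhd x hx)
  -- strict monotonicity of h and H on Ioi 0
  have hmono : StrictMonoOn h (Set.Ioi 0) := by
    apply strictMonoOn_of_deriv_pos (convex_Ioi 0)
    · exact fun x hx => ((hhd x hx).differentiableAt).continuousAt.continuousWithinAt
    · intro x hx
      rw [interior_Ioi] at hx
      rw [(hhd x hx).deriv]
      exact div_pos (hp1 x hx) hx
  have hHmono : StrictMonoOn H (Set.Ioi 0) := by
    apply strictMonoOn_of_deriv_pos (convex_Ioi 0)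
    · exact fun x hx => ((hHd x hx).differentiableAt).continuousAt.continuousWithinAt
    · intro x hx
      rw [interior_Ioi] at hx
      rw [(hHd x hx).deriv]
      have h1 := hp2 x hx
      have h2 := hp1 x hx
      have : deriv (deriv p) x / 2 + deriv p x / x
          = (2 * deriv p x + x * deriv (deriv p) x) / (2 * x) := by
        have hx0 : (x:ℝ) ≠ 0 := ne_of_gt hx
        field_simp
        ring
      rw [this]
      exact div_pos h1 (mul_pos two_pos hx)
  obtain ⟨ρ₀, hρ₀, hψ₀⟩ := hab
  obtain ⟨ρ₁, hρ₁, hψ₁⟩ := hbe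
  have hH₀ : ψ < H ρ₀ := by
    have := hp1 ρ₀ hρ₀
    rw [hH]; linarith
  have hlt : ρ₁ < ρ₀ := by
    by_contra hc
    push_neg at hc
    rcases eq_or_lt_of_le hc with rfl | hc
    · linarith
    · have := hHmono hρ₀ hρ₁ hc; linarith
  -- IVT
  have hIcc : Set.Icc ρ₁ ρ₀ ⊆ Set.Ioi 0 := fun t ht => lt_of_lt_of_le hρ₁ ht.1
  have hcont : ContinuousOn H (Set.Icc ρ₁ ρ₀) := fun x hx =>
    (((hHd x (hIcc hx)).differentiableAt).continuousAt).continuousWithinAt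
  obtain ⟨ρs0, hρs0mem, hρs0⟩ := intermediate_value_Icc (le_of_lt hlt) hcont ⟨hψ₁.le, hH₀.le⟩
  have hρs0pos : (0:ℝ) < ρs0 := hIcc hρs0mem
  -- key characterization lemma
  have key : ∀ ρs : ℝ, 0 < ρs → H ρs = ψ →
      (ψ - h ρs = deriv p ρs / 2 ∧ 0 < Real.sqrt (2 * ψ - 2 * h ρs)) ∧
      (∀ q ρ : ℝ, 0 ≤ q → 0 < ρ → h ρ = ψ - q^2 / 2 →
        ((q^2 < deriv p ρ ↔ q < Real.sqrt (2 * ψ - 2 * h ρs)) ∧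
         (q^2 = deriv p ρ ↔ q = Real.sqrt (2 * ψ - 2 * h ρs)))) := by
    intro ρs hρs hHs
    have hb : ψ - h ρs = deriv p ρs / 2 := by
      have := hH ρs; linarith
    have hps : 0 < deriv p ρs := hp1 ρs hρs
    have harg : 2 * ψ - 2 * h ρs = deriv p ρs := by linarith
    have hsq : Real.sqrt (2 * ψ - 2 * h ρs) ^ 2 = deriv p ρs := by
      rw [Real.sq_sqrt (by linarith)]; exact harg
    have hspos : 0 < Real.sqrt (2 * ψ - 2 * h ρs) := Real.sqrt_pos.2 (by linarith)
    refine ⟨⟨hb, hspos⟩, ?_⟩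
    intro q ρ hq hρ hber
    set s := Real.sqrt (2 * ψ - 2 * h ρs) with hs
    have hhr : h ρ = ψ - q^2/2 := hber
    have hhs : h ρs = ψ - s^2/2 := by rw [hsq]; linarith
    -- H ρ - ψ = (deriv p ρ - q²)/2
    have hHr : H ρ - ψ = (deriv p ρ - q^2)/2 := by
      have := hH ρ; rw [this, hhr]; ring
    have hordh : h ρs < h ρ ↔ H ρs < H ρ := by
      rw [hmono.lt_iff_lt hρs hρ, hHmono.lt_iff_lt hρs hρ]
    have hordh' : h ρ < h ρs ↔ H ρ < H ρs := by
      rw [hmono.lt_iff_lt hρ hρs, hHmono.lt_iff_lt hρ hρs]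
    have hordeq : h ρ = h ρs ↔ H ρ = H ρs := by
      constructor
      · intro e
        exact congrArg H (hmono.injOn hρ hρs e)
      · intro e
        exact congrArg h (hHmono.injOn hρ hρs e)
    have hqs : q < s ↔ q ^ 2 < s ^ 2 := by
      constructor
      · intro h'
        exact pow_lt_pow_left₀ h' hq two_ne_zero
      · intro h'
        exact lt_of_pow_lt_pow_left₀ 2 hspos.le h'
    have hqse : q = s ↔ q ^ 2 = s ^ 2 := by
      constructor
      · intro h'; rw [h']
      · intro h'
        have : Real.sqrt (q ^ 2) = Real.sqrt (s ^ 2) := by rw [h']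
        rwa [Real.sqrt_sq hq, Real.sqrt_sq hspos.le] at this
    constructor
    · rw [hqs]
      have h1 : q ^ 2 < deriv p ρ ↔ H ρs < H ρ := by
        rw [hHs]; constructor <;> intro <;> linarith
      rw [h1, ← hordh]
      rw [hhr, hhs]
      constructor <;> intro <;> linarith
    · rw [hqse]
      have h1 : q ^ 2 = deriv p ρ ↔ H ρ = H ρs := by
        rw [hHs]; constructor <;> intro <;> linarith
      rw [h1, ← hordeq]
      rw [hhr, hhs]
      constructor <;> intro <;> linarith
  refine ⟨⟨ρs0, ⟨hρs0pos, hρs0⟩, ?_⟩, key⟩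
  rintro y ⟨hy, hHy⟩
  exact hHmono.injOn hy hρs0pos (by rw [hHy, hρs0])
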